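/- Let H be a reduced, commutative, cancellative, atomic monoid. Then c_eq(H) = sup{μ_eq(a) : a ∈ H, A_a(∼_{H,eq}) ≠ ∅, and |R_{a,k}| > 1 for some k ∈ L(a)} = sup{k ∈ ℕ : there exists a ∈ H with A_a(∼_{H,eq}) ≠ ∅, k ∈ L(a), and |R_{a,k}| > 1}. -/

import Mathlib

namespace CMR

variable {α : Type*} [CancelCommMonoid α]

/-- The factorization monoid `Z(H)`: the free abelian monoid over the set of atoms of `H`,
modeled as multisets of atoms. -/
abbrev Fac (α : Type*) [CancelCommMonoid α] : Type _ := Multiset {u : α // Irreducible u}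

/-- The factorization homomorphism `π : Z(H) → H`. -/
def piF (z : Fac α) : α := (z.map Subtype.val).prod

/-- `Z a`: the set of factorizations of `a`. -/
def Z (a : α) : Set (Fac α) := {z | piF z = a}

/-- `L a`: the set of lengths of `a`. -/
def L (a : α) : Set ℕ := {n | ∃ z ∈ Z a, Multiset.card z = n}

/-- `Zk a k`: the factorizations of `a` of length `k`. -/
def Zk (a : α) (k : ℕ) : Set (Fac α) := {z ∈ Z a | Multiset.card z = k}

/-- `ZM a M`: the factorizations of `a` whose length lies in `M`. -/
def ZM (a : α) (M : Set ℕ) : Set (Fac α) := {z ∈ Z a | Multiset.card z ∈ M}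

/-- The distance between two factorizations:
`d(z,z') = max (|z / gcd(z,z')|, |z' / gcd(z,z')|)`. -/
noncomputable def d (z z' : Fac α) : ℕ :=
  letI := Classical.decEq {u : α // Irreducible u}
  max (Multiset.card (z - z')) (Multiset.card (z' - z))

/-- The distance between two sets of factorizations, the minimum of pairwise
distances (with the convention `sInf ∅ = 0`). -/
noncomputable def dS (X Y : Set (Fac α)) : ℕ :=
  sInf {n : ℕ | ∃ x ∈ X, ∃ y ∈ Y, d x y = n}

/-- `k` and `l` are adjacent lengths of `a` (with `k < l`):
`L(a) ∩ [k, l] = {k, l}`. -/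
def Adjacent (a : α) (k l : ℕ) : Prop :=
  k ∈ L a ∧ l ∈ L a ∧ k < l ∧ ∀ m ∈ L a, k ≤ m → m ≤ l → m = k ∨ m = l

/-- A chain of factorizations of `a` from `z` to `z'` whose consecutive members
satisfy the step predicate `P`. -/
def Chain (a : α) (P : Fac α → Fac α → Prop) (z z' : Fac α) : Prop :=
  ∃ (n : ℕ) (c : Fin (n + 1) → Fac α),
    c 0 = z ∧ c (Fin.last n) = z' ∧ (∀ i, c i ∈ Z a) ∧
    ∀ i : Fin n, P (c i.castSucc) (c i.succ)

/-- The catenary degree of an element: the smallest `N ∈ ℕ∞` such that any two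
factorizations of `a` are connected by an `N`-chain. -/
noncomputable def cat (a : α) : ℕ∞ :=
  sInf {N : ℕ∞ | ∀ z ∈ Z a, ∀ z' ∈ Z a,
    Chain a (fun x y => (d x y : ℕ∞) ≤ N) z z'}

/-- The equal catenary degree of an element: the smallest `N ∈ ℕ∞` such that any two
factorizations of `a` of the same length are connected by an equal-length `N`-chain. -/
noncomputable def ceq (a : α) : ℕ∞ :=
  sInf {N : ℕ∞ | ∀ z ∈ Z a, ∀ z' ∈ Z a, Multiset.card z = Multiset.card z' →
    Chain a (fun x y => (d x y : ℕ∞) ≤ N ∧ Multiset.card x = Multiset.card y) z z'}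

/-- The monotone catenary degree of an element: the smallest `N ∈ ℕ∞` such that any two
factorizations of `a` (ordered by length) are connected by a monotone `N`-chain. -/
noncomputable def cmon (a : α) : ℕ∞ :=
  sInf {N : ℕ∞ | ∀ z ∈ Z a, ∀ z' ∈ Z a, Multiset.card z ≤ Multiset.card z' →
    Chain a (fun x y => (d x y : ℕ∞) ≤ N ∧ Multiset.card x ≤ Multiset.card y) z z'}

/-- The adjacent catenary degree of an element:
`c_adj(a) = sup{d(Z_k(a), Z_l(a)) : k, l ∈ L(a) adjacent}`. -/
noncomputable def cadj (a : α) : ℕ∞ :=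
  sSup {r : ℕ∞ | ∃ k l : ℕ, Adjacent a k l ∧ r = (dS (Zk a k) (Zk a l) : ℕ∞)}

noncomputable def catH (α : Type*) [CancelCommMonoid α] : ℕ∞ := ⨆ a : α, cat a
noncomputable def ceqH (α : Type*) [CancelCommMonoid α] : ℕ∞ := ⨆ a : α, ceq a
noncomputable def cmonH (α : Type*) [CancelCommMonoid α] : ℕ∞ := ⨆ a : α, cmon a
noncomputable def cadjH (α : Type*) [CancelCommMonoid α] : ℕ∞ := ⨆ a : α, cadj a

/-- `gcd(x, y) ≠ 1`: the two factorizations share an atom. -/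
def RStep (x y : Fac α) : Prop := ∃ u, u ∈ x ∧ u ∈ y

/-- `z ≈ z'`: there is an `R`-chain concatenating `z` and `z'` in `Z a`. -/
def RRel (a : α) (z z' : Fac α) : Prop := Chain a RStep z z'

/-- `z ≈_eq z'`: there is an equal-length `R`-chain concatenating `z` and `z'` in `Z a`. -/
def RRelEq (a : α) (z z' : Fac α) : Prop :=
  Chain a (fun x y => RStep x y ∧ Multiset.card x = Multiset.card y) z z'

/-- There is a monotone `R`-chain from `z` to `z'` in `Z a`. -/
def MonRChain (a : α) (z z' : Fac α) : Prop :=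
  Chain a (fun x y => RStep x y ∧ Multiset.card x ≤ Multiset.card y) z z'

/-- `μ(a)`: the supremum, over the `R`-classes `ρ` of `Z a`, of the minimal length of
an element of `ρ`. -/
noncomputable def mu (a : α) : ℕ∞ :=
  sSup {r : ℕ∞ | ∃ z ∈ Z a,
    r = ((sInf {n : ℕ | ∃ z', RRel a z z' ∧ Multiset.card z' = n} : ℕ) : ℕ∞)}

noncomputable def muH (α : Type*) [CancelCommMonoid α] : ℕ∞ := ⨆ a : α, mu a

/-- `μ_eq(a) = sup{k ∈ L(a) : Z_k(a) has more than one ≈_eq-class}`. -/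
noncomputable def mueq (a : α) : ℕ∞ :=
  sSup {r : ℕ∞ | ∃ k ∈ L a,
    (∃ z ∈ Zk a k, ∃ z' ∈ Zk a k, ¬ RRelEq a z z') ∧ r = (k : ℕ∞)}

noncomputable def mueqH (α : Type*) [CancelCommMonoid α] : ℕ∞ := ⨆ a : α, mueq a

/-- `μ_adj(a) = sup{k ∈ L(a) : d(Z_k(a), Z_l(a)) = k for the l ∈ L(a), l < k adjacent to k}`. -/
noncomputable def muadj (a : α) : ℕ∞ :=
  sSup {r : ℕ∞ | ∃ k ∈ L a,
    (∃ l : ℕ, Adjacent a l k ∧ dS (Zk a k) (Zk a l) = k) ∧ r = (k : ℕ∞)}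

noncomputable def muadjH (α : Type*) [CancelCommMonoid α] : ℕ∞ := ⨆ a : α, muadj a

/-- The monoid of relations of `H`, as a subset of `Z(H) × Z(H)`. -/
def relMon (α : Type*) [CancelCommMonoid α] : Set (Fac α × Fac α) :=
  {p | piF p.1 = piF p.2}

/-- The monoid of equal-length relations of `H`. -/
def relMonEq (α : Type*) [CancelCommMonoid α] : Set (Fac α × Fac α) :=
  {p | piF p.1 = piF p.2 ∧ Multiset.card p.1 = Multiset.card p.2}

/-- The monoid of monotone relations of `H`. -/
def relMonMon (α : Type*) [CancelCommMonoid α] : Set (Fac α × Fac α) :=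
  {p | piF p.1 = piF p.2 ∧ Multiset.card p.1 ≤ Multiset.card p.2}

/-- `p` is an atom (irreducible element) of the reduced submonoid `S` of `Z(H) × Z(H)`. -/
def IsAtomIn (S : Set (Fac α × Fac α)) (p : Fac α × Fac α) : Prop :=
  p ∈ S ∧ p ≠ 0 ∧ ∀ q ∈ S, ∀ r ∈ S, p = q + r → q = 0 ∨ r = 0

/-- `A_a(S) = A(S) ∩ (Z(a) × Z(a))`. -/
def AtomsAt (S : Set (Fac α × Fac α)) (a : α) : Set (Fac α × Fac α) :=
  {p | IsAtomIn S p ∧ p.1 ∈ Z a ∧ p.2 ∈ Z a}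

/-- The tame degree `t(a, x)`. -/
noncomputable def tdeg (a : α) (x : Fac α) : ℕ∞ :=
  sInf {N : ℕ∞ | ∀ z ∈ Z a, (∃ w ∈ Z a, x ≤ w) →
    ∃ z' ∈ Z a, x ≤ z' ∧ (d z z' : ℕ∞) ≤ N}

/-- The tame degree `t(H) = sup{t(a, u) : a ∈ H, u ∈ A(H)}`. -/
noncomputable def tH (α : Type*) [CancelCommMonoid α] : ℕ∞ :=
  ⨆ (a : α) (u : {u : α // Irreducible u}), tdeg a {u}

/-- The `m`-adjacent catenary degree of an element:
`c_{ad,m}(a) = sup{d(Z_k(a), Z_{[k-m,k)}(a)) : k ∈ L(a)}`. -/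
noncomputable def cadm (m : ℕ) (a : α) : ℕ∞ :=
  sSup {r : ℕ∞ | ∃ k ∈ L a, r = (dS (Zk a k) (ZM a (Set.Ico (k - m) k)) : ℕ∞)}

noncomputable def cadmH (α : Type*) [CancelCommMonoid α] (m : ℕ) : ℕ∞ := ⨆ a : α, cadm m a

/-- `μ_{ad,m}(a) = sup{k ∈ L(a) : d(Z_k(a), Z_{[k-m,k)}(a)) = k}`. -/
noncomputable def muadm (m : ℕ) (a : α) : ℕ∞ :=
  sSup {r : ℕ∞ | ∃ k ∈ L a, dS (Zk a k) (ZM a (Set.Ico (k - m) k)) = k ∧ r = (k : ℕ∞)}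

noncomputable def muadmH (α : Type*) [CancelCommMonoid α] (m : ℕ) : ℕ∞ := ⨆ a : α, muadm m a

/-- `H` is reduced: the only unit is `1`. -/
def Reduced (α : Type*) [CancelCommMonoid α] : Prop := ∀ a : α, IsUnit a → a = 1

/-- `H` is atomic: every element is a product of atoms. -/
def Atomic (α : Type*) [CancelCommMonoid α] : Prop := ∀ a : α, ∃ z : Fac α, piF z = a

/-- The ascending chain condition on principal ideals. -/
def ACCP (α : Type*) [CancelCommMonoid α] : Prop :=
  ∀ f : ℕ → α, (∀ n, f (n + 1) ∣ f n) → ∃ N, ∀ n, N ≤ n → f N ∣ f n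
section Helpers
variable {α : Type*} [CancelCommMonoid α]

@[simp] lemma piF_zero : piF (0 : Fac α) = 1 := by simp [piF]

lemma piF_cons (u : {u : α // Irreducible u}) (z : Fac α) :
    piF (u ::ₘ z) = u.1 * piF z := by simp [piF]

lemma piF_add (x y : Fac α) : piF (x + y) = piF x * piF y := by simp [piF]

lemma piF_eq_one (hred : Reduced α) {z : Fac α} (h : piF z = 1) : z = 0 := by
  by_contra hz
  obtain ⟨u, hu⟩ := Multiset.exists_mem_of_ne_zero hz
  classical
  rw [← Multiset.cons_erase hu, piF_cons] at h
  exact u.2.not_isUnit (IsUnit.of_mul_eq_one _ h)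

lemma mem_Z_iff {a : α} {z : Fac α} : z ∈ Z a ↔ piF z = a := Iff.rfl

lemma mem_Zk_iff {a : α} {k : ℕ} {z : Fac α} :
    z ∈ Zk a k ↔ z ∈ Z a ∧ Multiset.card z = k := Iff.rfl

lemma chain_iff {a : α} {P : Fac α → Fac α → Prop} {z z' : Fac α} :
    Chain a P z z' ↔ z ∈ Z a ∧ z' ∈ Z a ∧
      Relation.ReflTransGen (fun x y => P x y ∧ x ∈ Z a ∧ y ∈ Z a) z z' := by
  constructor
  · rintro ⟨n, c, h0, hl, hm, hs⟩
    subst h0; subst hl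
    refine ⟨hm 0, hm _, ?_⟩
    induction n with
    | zero => exact Relation.ReflTransGen.refl
    | succ n ih =>
      have := ih (fun i => c i.castSucc) (fun i => hm _) (fun i => hs i.castSucc)
      simp only [Fin.castSucc_zero] at this
      exact this.tail ⟨hs (Fin.last n), hm _, by rw [Fin.succ_last]; exact hm _⟩
        |>.trans (by rw [Fin.succ_last])
  · rintro ⟨hz, hz', h⟩
    clear hz'
    induction h with
    | refl => exact ⟨0, fun _ => z, rfl, rfl, fun _ => hz, fun i => i.elim0⟩
    | @tail b c hzb hbc ih =>
      obtain ⟨n, f, h0, hl, hm, hs⟩ := ih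
      refine ⟨n + 1, Fin.snoc f c, ?_, ?_, ?_, ?_⟩
      · rw [show (0 : Fin (n+2)) = Fin.castSucc 0 by rfl, Fin.snoc_castSucc]; exact h0
      · simp
      · intro i
        refine Fin.lastCases ?_ (fun j => ?_) i
        · simpa using hbc.2.2
        · rw [Fin.snoc_castSucc]; exact hm j
      · intro i
        refine Fin.lastCases ?_ (fun j => ?_) i
        · rw [Fin.snoc_castSucc, Fin.succ_last, Fin.snoc_last, hl]
          exact hbc.1
        · rw [Fin.succ_castSucc, Fin.snoc_castSucc, Fin.snoc_castSucc]
          exact hs j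

end Helpers
section Helpers2
variable {α : Type*} [CancelCommMonoid α]

lemma d_eq [inst : DecidableEq {u : α // Irreducible u}] (z z' : Fac α) :
    d z z' = max (Multiset.card (z - z')) (Multiset.card (z' - z)) := by
  unfold d
  congr <;> exact Subsingleton.elim _ _

lemma d_le_of_card {k : ℕ} {z z' : Fac α} (hz : Multiset.card z = k)
    (hz' : Multiset.card z' = k) : d z z' ≤ k := by
  classical
  rw [d_eq]
  exact max_le (le_trans (Multiset.card_le_card (Multiset.sub_le_self _ _)) hz.le)
    (le_trans (Multiset.card_le_card (Multiset.sub_le_self _ _)) hz'.le)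

lemma d_cons (u : {u : α // Irreducible u}) (x y : Fac α) :
    d (u ::ₘ x) (u ::ₘ y) = d x y := by
  classical
  rw [d_eq, d_eq]
  congr 2 <;> · ext w; simp [Multiset.count_sub, Multiset.count_cons]

lemma d_eq_of_not_rstep {k : ℕ} {z z' : Fac α} (hz : Multiset.card z = k)
    (hz' : Multiset.card z' = k) (h : ¬ RStep z z') : d z z' = k := by
  classical
  have hsub : ∀ (s t : Fac α), (∀ w, ¬(w ∈ s ∧ w ∈ t)) → s - t = s := by
    intro s t hd
    ext w; rw [Multiset.count_sub]
    rcases Nat.eq_zero_or_pos (Multiset.count w t) with h0|h0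
    · simp [h0]
    · have : w ∉ s := fun hw => hd w ⟨hw, Multiset.count_pos.mp h0⟩
      simp [Multiset.count_eq_zero_of_notMem this]
  have h1 : ∀ w, ¬(w ∈ z ∧ w ∈ z') := fun w hw => h ⟨w, hw⟩
  have h2 : ∀ w, ¬(w ∈ z' ∧ w ∈ z) := fun w hw => h ⟨w, hw.2, hw.1⟩
  rw [d_eq, hsub _ _ h1, hsub _ _ h2, hz, hz', max_self]

end Helpers2
section Helpers3
variable {α : Type*} [CancelCommMonoid α]

lemma rreleq_refl {a : α} {z : Fac α} (hz : z ∈ Z a) : RRelEq a z z :=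
  chain_iff.mpr ⟨hz, hz, Relation.ReflTransGen.refl⟩

lemma le_ceq_of_bad {a : α} {k : ℕ}
    (h : ∃ z ∈ Zk a k, ∃ z' ∈ Zk a k, ¬ RRelEq a z z') : (k : ℕ∞) ≤ ceq a := by
  refine le_sInf ?_
  rintro N hN
  obtain ⟨z, hz, z', hz', hne⟩ := h
  have hch := hN z hz.1 z' hz'.1 (hz.2.trans hz'.2.symm)
  rw [chain_iff] at hch
  obtain ⟨hz1, hz2, hrtg⟩ := hch
  have key : ∀ w, Relation.ReflTransGen
      (fun x y => ((d x y : ℕ∞) ≤ N ∧ Multiset.card x = Multiset.card y)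
        ∧ x ∈ Z a ∧ y ∈ Z a) z w →
      Multiset.card w = k ∧
        (Relation.ReflTransGen
          (fun x y => (RStep x y ∧ Multiset.card x = Multiset.card y)
            ∧ x ∈ Z a ∧ y ∈ Z a) z w ∨ (k : ℕ∞) ≤ N) := by
    intro w hw
    induction hw with
    | refl => exact ⟨hz.2, Or.inl Relation.ReflTransGen.refl⟩
    | @tail b c hb hbc ih =>
      have hcb : Multiset.card c = k := hbc.1.2 ▸ ih.1
      refine ⟨hcb, ?_⟩
      rcases ih.2 with hQ | hle
      · by_cases hRS : RStep b c
        · exact Or.inl (hQ.tail ⟨⟨hRS, hbc.1.2⟩, hbc.2⟩)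
        · refine Or.inr ?_
          have hd : d b c = k := d_eq_of_not_rstep ih.1 hcb hRS
          calc (k : ℕ∞) = (d b c : ℕ∞) := by rw [hd]
            _ ≤ N := hbc.1.1
      · exact Or.inr hle
  rcases (key z' hrtg).2 with hQ | hle
  · exact absurd (chain_iff.mpr ⟨hz1, hz2, hQ⟩) hne
  · exact hle

lemma atomsAt_nonempty_of_bad (hred : Reduced α) {a : α} {k : ℕ}
    {z z' : Fac α} (hz : z ∈ Zk a k) (hz' : z' ∈ Zk a k) (hne : ¬ RRelEq a z z') :
    (AtomsAt (relMonEq α) a).Nonempty := by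
  have hza : piF z = a := hz.1
  have hz'a : piF z' = a := hz'.1
  refine ⟨(z, z'), ⟨⟨hza.trans hz'a.symm, hz.2.trans hz'.2.symm⟩, ?_, ?_⟩, hz.1, hz'.1⟩
  · intro h0
    have h1 : z = 0 := congrArg Prod.fst h0
    have h2 : z' = 0 := congrArg Prod.snd h0
    subst h1; subst h2
    exact hne (rreleq_refl hz.1)
  · rintro ⟨q1, q2⟩ hq ⟨r1, r2⟩ hr heq
    by_contra hboth
    push_neg at hboth
    obtain ⟨hqne, hrne⟩ := hboth
    have heq1 : z = q1 + r1 := congrArg Prod.fst heq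
    have heq2 : z' = q2 + r2 := congrArg Prod.snd heq
    have hq12 : piF q1 = piF q2 := hq.1
    have hr12 : piF r1 = piF r2 := hr.1
    have hqc : Multiset.card q1 = Multiset.card q2 := hq.2
    have hrc : Multiset.card r1 = Multiset.card r2 := hr.2
    have hq1 : q1 ≠ 0 := by
      intro h1
      have h2 : q2 = 0 := piF_eq_one hred (by rw [← hq12, h1, piF_zero])
      exact hqne (by rw [Prod.mk.injEq]; exact ⟨h1, h2⟩)
    have hr2 : r2 ≠ 0 := by
      intro h1
      have h2 : r1 = 0 := piF_eq_one hred (by rw [hr12, h1, piF_zero])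
      exact hrne (by rw [Prod.mk.injEq]; exact ⟨h2, h1⟩)
    obtain ⟨u, hu⟩ := Multiset.exists_mem_of_ne_zero hq1
    obtain ⟨v, hv⟩ := Multiset.exists_mem_of_ne_zero hr2
    have hwZ : piF (q1 + r2) = a := by
      rw [piF_add, hq12, ← piF_add, ← heq2, hz'a]
    have hcw : Multiset.card z = Multiset.card (q1 + r2) := by
      rw [heq1]; simp [hrc]
    have hcw' : Multiset.card (q1 + r2) = Multiset.card z' := by
      rw [heq2]; simp [hqc]
    refine hne (chain_iff.mpr ⟨hz.1, hz'.1, ?_⟩)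
    refine Relation.ReflTransGen.tail (b := q1 + r2) (Relation.ReflTransGen.single ?_) ?_
    · exact ⟨⟨⟨u, by rw [heq1]; exact Multiset.mem_add.mpr (Or.inl hu),
        Multiset.mem_add.mpr (Or.inl hu)⟩, hcw⟩, hz.1, hwZ⟩
    · exact ⟨⟨⟨v, Multiset.mem_add.mpr (Or.inr hv),
        by rw [heq2]; exact Multiset.mem_add.mpr (Or.inr hv)⟩, hcw'⟩, hwZ, hz'.1⟩

end Helpers3
section Helpers4
variable {α : Type*} [CancelCommMonoid α]

lemma main_chain (hred : Reduced α) (N : ℕ∞)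
    (hN : ∀ (b : α) (k : ℕ), 0 < k → (AtomsAt (relMonEq α) b).Nonempty → k ∈ L b →
      (∃ z ∈ Zk b k, ∃ z' ∈ Zk b k, ¬ RRelEq b z z') → (k : ℕ∞) ≤ N) :
    ∀ (k : ℕ) (a : α) (z : Fac α), z ∈ Z a → ∀ z' ∈ Z a, Multiset.card z = k →
      Multiset.card z' = k →
      Chain a (fun x y => (d x y : ℕ∞) ≤ N ∧ Multiset.card x = Multiset.card y) z z' := by
  intro k
  induction k using Nat.strong_induction_on with
  | _ k ih =>
    intro a z hz z' hz' hcz hcz'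
    by_cases hR : RRelEq a z z'
    · refine chain_iff.mpr ⟨hz, hz', ?_⟩
      obtain ⟨-, -, hrtg⟩ := chain_iff.mp hR
      have key : ∀ w, Relation.ReflTransGen
          (fun x y => (RStep x y ∧ Multiset.card x = Multiset.card y)
            ∧ x ∈ Z a ∧ y ∈ Z a) z w →
          Multiset.card w = k ∧ Relation.ReflTransGen
            (fun x y => ((d x y : ℕ∞) ≤ N ∧ Multiset.card x = Multiset.card y)
              ∧ x ∈ Z a ∧ y ∈ Z a) z w := by
        intro w hw
        induction hw with
        | refl => exact ⟨hcz, Relation.ReflTransGen.refl⟩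
        | @tail x y hx hxy ihw =>
          obtain ⟨⟨⟨u, hux, huy⟩, hcxy⟩, hxZ, hyZ⟩ := hxy
          have hcy : Multiset.card y = k := hcxy ▸ ihw.1
          refine ⟨hcy, ihw.2.trans ?_⟩
          classical
          have hxe : u ::ₘ x.erase u = x := Multiset.cons_erase hux
          have hye : u ::ₘ y.erase u = y := Multiset.cons_erase huy
          have hb : piF (x.erase u) = piF (y.erase u) := by
            have h1 : u.1 * piF (x.erase u) = u.1 * piF (y.erase u) := by
              rw [← piF_cons, ← piF_cons, hxe, hye, hxZ, hyZ]
            exact mul_left_cancel h1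
          have hk1 : k - 1 < k := by
            have : 0 < k := by
              rw [← ihw.1, ← hxe]; simp
            omega
          have hcx0 : Multiset.card (x.erase u) = k - 1 := by
            have := congrArg Multiset.card hxe
            simp only [Multiset.card_cons] at this
            omega
          have hcy0 : Multiset.card (y.erase u) = k - 1 := by
            have := congrArg Multiset.card hye
            simp only [Multiset.card_cons] at this
            rw [hcy] at this; omega
          have hsub := ih (k - 1) hk1 (piF (x.erase u)) (x.erase u) rfl
            (y.erase u) hb.symm hcx0 hcy0
          rw [chain_iff] at hsub
          obtain ⟨-, -, hsub⟩ := hsub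
          have hstep : ∀ p q : Fac α,
              (((d p q : ℕ∞) ≤ N ∧ Multiset.card p = Multiset.card q) ∧
                p ∈ Z (piF (x.erase u)) ∧ q ∈ Z (piF (x.erase u))) →
              (((d (u ::ₘ p) (u ::ₘ q) : ℕ∞) ≤ N ∧
                Multiset.card (u ::ₘ p) = Multiset.card (u ::ₘ q)) ∧
                (u ::ₘ p) ∈ Z a ∧ (u ::ₘ q) ∈ Z a) := by
            rintro p q ⟨⟨hd, hc⟩, hp, hq⟩
            refine ⟨⟨by rw [d_cons]; exact hd, by simp [hc]⟩, ?_, ?_⟩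
            · show piF (u ::ₘ p) = a
              rw [piF_cons, mem_Z_iff.mp hp, ← piF_cons, hxe]
              exact hxZ
            · show piF (u ::ₘ q) = a
              rw [piF_cons, mem_Z_iff.mp hq, ← piF_cons, hxe]
              exact hxZ
          have hlift := Relation.ReflTransGen.lift
            (p := fun x y => ((d x y : ℕ∞) ≤ N ∧ Multiset.card x = Multiset.card y) ∧
              x ∈ Z a ∧ y ∈ Z a)
            (fun w => u ::ₘ w) hstep _ _ hsub
          simp only [Function.onFun] at hlift
          rw [hxe, hye] at hlift
          exact hlift
      exact (key z' hrtg).2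
    · rcases eq_or_ne z z' with rfl | hne
      · exact chain_iff.mpr ⟨hz, hz, Relation.ReflTransGen.refl⟩
      · have hkpos : 0 < k := by
          rcases Nat.eq_zero_or_pos k with h0 | h; swap; · exact h
          exact absurd ((Multiset.card_eq_zero.mp (hcz.trans h0)).trans
            (Multiset.card_eq_zero.mp (hcz'.trans h0)).symm) hne
        have hbad : ∃ w ∈ Zk a k, ∃ w' ∈ Zk a k, ¬ RRelEq a w w' :=
          ⟨z, ⟨hz, hcz⟩, z', ⟨hz', hcz'⟩, hR⟩
        have hkN := hN a k hkpos
          (atomsAt_nonempty_of_bad hred ⟨hz, hcz⟩ ⟨hz', hcz'⟩ hR)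
          ⟨z, hz, hcz⟩ hbad
        refine chain_iff.mpr ⟨hz, hz', Relation.ReflTransGen.single ?_⟩
        refine ⟨⟨?_, hcz.trans hcz'.symm⟩, hz, hz'⟩
        calc ((d z z' : ℕ) : ℕ∞) ≤ (k : ℕ∞) :=
              Nat.cast_le.mpr (d_le_of_card hcz hcz')
          _ ≤ N := hkN

lemma ceq_le_main (hred : Reduced α) (N : ℕ∞)
    (hN : ∀ (b : α) (k : ℕ), 0 < k → (AtomsAt (relMonEq α) b).Nonempty → k ∈ L b →
      (∃ z ∈ Zk b k, ∃ z' ∈ Zk b k, ¬ RRelEq b z z') → (k : ℕ∞) ≤ N)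
    (a : α) : ceq a ≤ N := by
  refine sInf_le ?_
  intro z hz z' hz' hcc
  exact main_chain hred N hN (Multiset.card z) a z hz z' hz' rfl hcc.symm

end Helpers4

/-- Let `H` be a reduced, commutative, cancellative, atomic monoid. Then
`c_eq(H) = sup{μ_eq(a) : a ∈ H, A_a(∼_{H,eq}) ≠ ∅, |R_{a,k}| > 1 for some k ∈ L(a)}`
`        = sup{k ∈ ℕ : ∃ a ∈ H with A_a(∼_{H,eq}) ≠ ∅, k ∈ L(a), |R_{a,k}| > 1}`. -/
theorem stmt5 {α : Type*} [CancelCommMonoid α]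
    (hred : Reduced α) (hatomic : Atomic α) :
    ceqH α = sSup {r : ℕ∞ | ∃ a : α, (AtomsAt (relMonEq α) a).Nonempty ∧
        (∃ k ∈ L a, ∃ z ∈ Zk a k, ∃ z' ∈ Zk a k, ¬ RRelEq a z z') ∧ r = mueq a} ∧
    ceqH α = sSup {r : ℕ∞ | ∃ k : ℕ, 0 < k ∧
        (∃ a : α, (AtomsAt (relMonEq α) a).Nonempty ∧ k ∈ L a ∧
          ∃ z ∈ Zk a k, ∃ z' ∈ Zk a k, ¬ RRelEq a z z') ∧ r = (k : ℕ∞)} := by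
  set S1 : Set ℕ∞ := {r : ℕ∞ | ∃ a : α, (AtomsAt (relMonEq α) a).Nonempty ∧
        (∃ k ∈ L a, ∃ z ∈ Zk a k, ∃ z' ∈ Zk a k, ¬ RRelEq a z z') ∧ r = mueq a} with hS1def
  set S2 : Set ℕ∞ := {r : ℕ∞ | ∃ k : ℕ, 0 < k ∧
        (∃ a : α, (AtomsAt (relMonEq α) a).Nonempty ∧ k ∈ L a ∧
          ∃ z ∈ Zk a k, ∃ z' ∈ Zk a k, ¬ RRelEq a z z') ∧ r = (k : ℕ∞)} with hS2def
  have hBle : ceqH α ≤ sSup S2 := by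
    rw [ceqH]
    refine iSup_le fun a => ?_
    refine ceq_le_main hred _ ?_ a
    intro b k hk hA hL hbad
    exact le_sSup ⟨k, hk, ⟨b, hA, hL, hbad⟩, rfl⟩
  have hleB : sSup S2 ≤ ceqH α := by
    refine sSup_le ?_
    rintro r ⟨k, hk, ⟨b, hA, hL, hbad⟩, rfl⟩
    refine (le_ceq_of_bad hbad).trans ?_
    rw [ceqH]
    exact le_iSup ceq b
  have h2 : ceqH α = sSup S2 := le_antisymm hBle hleB
  have hS2S1 : sSup S2 ≤ sSup S1 := by
    refine sSup_le ?_
    rintro r ⟨k, hk, ⟨b, hA, hL, hbad⟩, rfl⟩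
    have h1 : (k : ℕ∞) ≤ mueq b := by
      rw [mueq]; exact le_sSup ⟨k, hL, hbad, rfl⟩
    exact h1.trans (le_sSup ⟨b, hA, ⟨k, hL, hbad⟩, rfl⟩)
  have hS1le : sSup S1 ≤ ceqH α := by
    refine sSup_le ?_
    rintro r ⟨b, hA, hex, rfl⟩
    rw [mueq]
    refine sSup_le ?_
    rintro r' ⟨k, hL, hbad, rfl⟩
    refine (le_ceq_of_bad hbad).trans ?_
    rw [ceqH]
    exact le_iSup ceq b
  exact ⟨le_antisymm (h2.le.trans hS2S1) hS1le, h2⟩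

end CMR
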